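/- arXiv:1904.02958 — 5 statements merged into one kernel-verified Lean document; each statement's English description precedes it below -/
import Mathlib

section
/- Let α, β ≥ 0 with β ≥ α, and c > 0. Then the extended logistic loss ℓ_{α,β,c}(x) = ln_{α,c}(c + exp_{β,c}(-x)) satisfies ℓ''_{α,β,c}(x) = [β(c + h(x)) - α h(x)] · h(x)^{2β-1}/(c + h(x))^{α+1} ≥ 0 for all x in the interior of its domain, where h(x) = exp_{β,c}(-x); hence ℓ_{α,β,c} is convex on the interior of its domain. -/
open Real Set Filter

/-- For `β ≥ α ≥ 0` and `c > 0`, the extended logistic loss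
`ℓ_{α,β,c}(x) = ln_{α,c}(c + exp_{β,c}(-x))` has second derivative
`[β(c+h) - αh]·h^(2β-1)/(c+h)^(α+1) ≥ 0` on the interior of its domain
(`h(x) = exp_{β,c}(-x)`), hence it is convex there. -/
theorem extended_logistic_loss_convex (α β c : ℝ) (hα : 0 ≤ α) (hαβ : α ≤ β) (hc : 0 < c) :
    let eexp : ℝ → ℝ := fun v =>
      if β = 1 then c * Real.exp v else (c ^ (1 - β) + (1 - β) * v) ^ (1 / (1 - β))
    let domExp : Set ℝ :=
      if β = 1 then Set.univ
      else if β < 1 then Set.Ici (c ^ (1 - β) / (β - 1))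
      else Set.Iio (c ^ (1 - β) / (β - 1))
    let domLoss : Set ℝ := {x : ℝ | -x ∈ domExp}
    let loss : ℝ → ℝ := fun x =>
      if α = 1 then Real.log ((c + eexp (-x)) / c)
      else ((c + eexp (-x)) ^ (1 - α) - c ^ (1 - α)) / (1 - α)
    (∀ x ∈ interior domLoss,
      deriv (deriv loss) x =
        (β * (c + eexp (-x)) - α * eexp (-x)) * (eexp (-x)) ^ (2 * β - 1) /
          (c + eexp (-x)) ^ (α + 1) ∧
      0 ≤ (β * (c + eexp (-x)) - α * eexp (-x)) * (eexp (-x)) ^ (2 * β - 1) /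
          (c + eexp (-x)) ^ (α + 1)) ∧
    ConvexOn ℝ (interior domLoss) loss := by
  intro eexp domExp domLoss loss
  set S := interior domLoss with hSdef
  have hSopen : IsOpen S := isOpen_interior
  set a : ℝ := c ^ (1 - β) / (β - 1) with ha
  -- description of domLoss
  have hDL : (β = 1 ∧ domLoss = Set.univ) ∨
      (β < 1 ∧ domLoss = Set.Iic (-a)) ∨ (1 < β ∧ domLoss = Set.Ioi (-a)) := by
    by_cases hb : β = 1
    · left
      refine ⟨hb, ?_⟩
      ext x
      simp [domLoss, domExp, hb]
    · rcases lt_or_gt_of_ne hb with hlt | hgt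
      · right; left
        refine ⟨hlt, ?_⟩
        ext x
        simp only [domLoss, domExp, if_neg hb, if_pos hlt, Set.mem_setOf_eq, Set.mem_Ici,
          Set.mem_Iic]
        constructor <;> intro h <;> linarith
      · right; right
        refine ⟨hgt, ?_⟩
        ext x
        simp only [domLoss, domExp, if_neg hb, if_neg (not_lt.mpr hgt.le), Set.mem_setOf_eq,
          Set.mem_Iio, Set.mem_Ioi]
        constructor <;> intro h <;> linarith
  -- positivity of the inner argument on S
  have h1βa : (1 - β) * a = -(c ^ (1 - β)) ∨ β = 1 := by
    by_cases hb : β = 1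
    · right; exact hb
    · left
      have hb' : β - 1 ≠ 0 := sub_ne_zero_of_ne hb
      rw [ha, mul_div_assoc', div_eq_iff hb']
      ring
  have ht : ∀ x ∈ S, 0 < c ^ (1 - β) + (1 - β) * (-x) := by
    intro x hx
    rcases hDL with ⟨hb, _⟩ | ⟨hlt, hD⟩ | ⟨hgt, hD⟩
    · rw [hb]
      norm_num
    · rcases h1βa with h1 | h1
      · rw [hSdef, hD, interior_Iic] at hx
        have hx' : a < -x := by
          have := Set.mem_Iio.mp hx
          linarith
        have := mul_lt_mul_of_pos_left hx' (by linarith : (0:ℝ) < 1 - β)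
        linarith
      · exact absurd h1 (by linarith)
    · rcases h1βa with h1 | h1
      · rw [hSdef, hD, interior_Ioi] at hx
        have hx' : -x < a := by
          have := Set.mem_Ioi.mp hx
          linarith
        have := mul_lt_mul_of_neg_left hx' (by linarith : 1 - β < 0)
        linarith
      · exact absurd h1 (by linarith)
  -- positivity of h = eexp(-x)
  have hpos : ∀ x ∈ S, 0 < eexp (-x) := by
    intro x hx
    by_cases hb : β = 1
    · show 0 < if β = 1 then c * Real.exp (-x) else _
      rw [if_pos hb]
      positivity
    · show 0 < if β = 1 then _ else (c ^ (1 - β) + (1 - β) * (-x)) ^ (1 / (1 - β))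
      rw [if_neg hb]
      exact Real.rpow_pos_of_pos (ht x hx) _
  have hch : ∀ x ∈ S, 0 < c + eexp (-x) := fun x hx => add_pos hc (hpos x hx)
  -- derivative of h
  have hderiv : ∀ x ∈ S, HasDerivAt (fun y => eexp (-y)) (-(eexp (-x)) ^ β) x := by
    intro x hx
    by_cases hb : β = 1
    · have h1 : HasDerivAt (fun y : ℝ => c * Real.exp (-y)) (c * (Real.exp (-x) * (-1))) x :=
        ((hasDerivAt_neg x).exp).const_mul c
      have hfun : (fun y : ℝ => eexp (-y)) = fun y => c * Real.exp (-y) := by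
        funext y
        show (if β = 1 then c * Real.exp (-y) else _) = _
        rw [if_pos hb]
      rw [hfun]
      convert h1 using 1
      have : eexp (-x) = c * Real.exp (-x) := by
        show (if β = 1 then c * Real.exp (-x) else _) = _
        rw [if_pos hb]
      rw [this, hb, Real.rpow_one]
      ring
    · have hb' : (1 : ℝ) - β ≠ 0 := sub_ne_zero_of_ne (Ne.symm hb)
      have htx := ht x hx
      have hinner : HasDerivAt (fun y : ℝ => c ^ (1 - β) + (1 - β) * (-y)) ((1 - β) * (-1)) x :=
        (((hasDerivAt_neg x)).const_mul (1 - β)).const_add (c ^ (1 - β))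
      have h2 := hinner.rpow_const (p := 1 / (1 - β)) (Or.inl htx.ne')
      have hfun : (fun y : ℝ => eexp (-y)) =
          fun y => (c ^ (1 - β) + (1 - β) * (-y)) ^ (1 / (1 - β)) := by
        funext y
        show (if β = 1 then _ else (c ^ (1 - β) + (1 - β) * (-y)) ^ (1 / (1 - β))) = _
        rw [if_neg hb]
      rw [hfun]
      convert h2 using 1
      have he : eexp (-x) = (c ^ (1 - β) + (1 - β) * (-x)) ^ (1 / (1 - β)) := by
        show (if β = 1 then _ else _) = _
        rw [if_neg hb]
      rw [he, ← Real.rpow_mul htx.le]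
      have hexp : 1 / (1 - β) * β = 1 / (1 - β) - 1 := by
        field_simp
        ring
      rw [hexp]
      field_simp
  -- first derivative of loss
  set g : ℝ → ℝ := fun x => -((c + eexp (-x)) ^ (-α) * (eexp (-x)) ^ β) with hg
  have hlossderiv : ∀ x ∈ S, HasDerivAt loss (g x) x := by
    intro x hx
    have hh := hderiv x hx
    have hch' := hch x hx
    by_cases hA : α = 1
    · have hL : loss = fun y => Real.log ((c + eexp (-y)) / c) := by
        funext y
        show (if α = 1 then _ else _) = _
        rw [if_pos hA]
      rw [hL]
      have h2 : HasDerivAt (fun y => (c + eexp (-y)) / c) ((-(eexp (-x)) ^ β) / c) x :=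
        (hh.const_add c).div_const c
      have h3 := h2.log (by positivity)
      convert h3 using 1
      rw [hg]
      simp only
      rw [hA, Real.rpow_neg_one]
      field_simp
    · have hL : loss = fun y => ((c + eexp (-y)) ^ (1 - α) - c ^ (1 - α)) / (1 - α) := by
        funext y
        show (if α = 1 then _ else _) = _
        rw [if_neg hA]
      rw [hL]
      have hA' : (1 : ℝ) - α ≠ 0 := sub_ne_zero_of_ne (Ne.symm hA)
      have h2 := (((hh.const_add c).rpow_const (p := 1 - α)
        (Or.inl hch'.ne')).sub_const (c ^ (1 - α))).div_const (1 - α)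
      refine h2.congr_deriv ?_
      symm
      rw [hg]
      simp only
      rw [show (1 : ℝ) - α - 1 = -α by ring]
      field_simp
  -- second derivative
  have hT : ∀ x ∈ S, HasDerivAt g
      ((β * (c + eexp (-x)) - α * eexp (-x)) * (eexp (-x)) ^ (2 * β - 1) /
        (c + eexp (-x)) ^ (α + 1)) x := by
    intro x hx
    have hh := hderiv x hx
    have hp := hpos x hx
    have hc' := hch x hx
    have d1 : HasDerivAt (fun y => (c + eexp (-y)) ^ (-α))
        ((-(eexp (-x)) ^ β) * (-α) * (c + eexp (-x)) ^ (-α - 1)) x :=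
      (hh.const_add c).rpow_const (Or.inl hc'.ne')
    have d2 : HasDerivAt (fun y => (eexp (-y)) ^ β)
        ((-(eexp (-x)) ^ β) * β * (eexp (-x)) ^ (β - 1)) x :=
      hh.rpow_const (Or.inl hp.ne')
    have d3 := (d1.mul d2).neg
    refine d3.congr_deriv ?_
    symm
    set h := eexp (-x) with hh'
    have e2 : h ^ β * h ^ (β - 1) = h ^ (2 * β - 1) := by
      rw [← Real.rpow_add hp]; ring_nf
    have e1 : h ^ β * h ^ β = h ^ (2 * β - 1) * h := by
      rw [← Real.rpow_add hp, ← Real.rpow_add_one hp.ne']; ring_nf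
    have e5 : (c + h) ^ (α + 1) = (c + h) ^ α * (c + h) := Real.rpow_add_one hc'.ne' α
    have e3 : (c + h) ^ (-α - 1) = ((c + h) ^ α * (c + h))⁻¹ := by
      rw [show -α - 1 = -(α + 1) by ring, Real.rpow_neg hc'.le, e5]
    have e4 : (c + h) ^ (-α) = ((c + h) ^ α)⁻¹ := by
      rw [Real.rpow_neg hc'.le]
    have hP : (0 : ℝ) < (c + h) ^ α := Real.rpow_pos_of_pos hc' _
    rw [e3, e4, e5]
    field_simp
    rw [show β * 2 - 1 = 2 * β - 1 by ring]
    linear_combination (-(β * (c + h))) * e2 +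
      α * e1
  -- conclusion
  have hEq : ∀ x ∈ S, deriv loss =ᶠ[nhds x] g := by
    intro x hx
    filter_upwards [hSopen.mem_nhds hx] with y hy using (hlossderiv y hy).deriv
  have hMain : ∀ x ∈ S,
      deriv (deriv loss) x =
        (β * (c + eexp (-x)) - α * eexp (-x)) * (eexp (-x)) ^ (2 * β - 1) /
          (c + eexp (-x)) ^ (α + 1) := by
    intro x hx
    rw [(hEq x hx).deriv_eq, (hT x hx).deriv]
  have hNonneg : ∀ x ∈ S,
      0 ≤ (β * (c + eexp (-x)) - α * eexp (-x)) * (eexp (-x)) ^ (2 * β - 1) /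
          (c + eexp (-x)) ^ (α + 1) := by
    intro x hx
    apply div_nonneg
    · apply mul_nonneg
      · nlinarith [hpos x hx]
      · exact (Real.rpow_pos_of_pos (hpos x hx) _).le
    · exact (Real.rpow_pos_of_pos (hch x hx) _).le
  refine ⟨fun x hx => ⟨hMain x hx, hNonneg x hx⟩, ?_⟩
  -- convexity
  have hConvS : Convex ℝ S := by
    rcases hDL with ⟨_, hD⟩ | ⟨_, hD⟩ | ⟨_, hD⟩ <;> rw [hSdef, hD]
    · simp [convex_univ]
    · rw [interior_Iic]; exact convex_Iio _
    · rw [interior_Ioi]; exact convex_Ioi _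
  apply convexOn_of_deriv2_nonneg' hConvS
  · intro x hx
    exact (hlossderiv x hx).differentiableAt.differentiableWithinAt
  · intro x hx
    exact (((hT x hx).differentiableAt).congr_of_eventuallyEq
      (hEq x hx)).differentiableWithinAt
  · intro x hx
    show 0 ≤ deriv (deriv loss) x
    rw [hMain x hx]
    exact hNonneg x hx
end

section
/- For 0 < α < 1 and c > 0, the Logitron loss L_{α,c} is continuously differentiable on ℝ, with derivative L'_{α,c}(z) = -(exp_{α,c}(-z)/(c + exp_{α,c}(-z)))^α for z < -c_α and L'_{α,c}(z) = 0 for z ≥ -c_α; in particular the derivative tends to 0 as z → -c_α from the left. -/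
lemma logitron_aux (α c : ℝ) (hα0 : 0 < α) (hα1 : α < 1) (hc : 0 < c) (z : ℝ)
    (hz : 0 ≤ c ^ (1 - α) + (1 - α) * (-z)) :
    HasDerivAt (fun z : ℝ =>
        ((c + (c ^ (1 - α) + (1 - α) * (-z)) ^ (1 / (1 - α))) ^ (1 - α) - c ^ (1 - α)) / (1 - α))
      (-((c ^ (1 - α) + (1 - α) * (-z)) ^ (α / (1 - α)) *
          (c + (c ^ (1 - α) + (1 - α) * (-z)) ^ (1 / (1 - α))) ^ (-α))) z := by
  have h1α : (0:ℝ) < 1 - α := by linarith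
  have h1α' : (1:ℝ) - α ≠ 0 := ne_of_gt h1α
  have hp : (1:ℝ) ≤ 1 / (1 - α) := by
    rw [le_div_iff₀ h1α]; linarith
  have hgd : HasDerivAt (fun z : ℝ => c ^ (1 - α) + (1 - α) * (-z)) (-(1 - α)) z := by
    simpa using (((hasDerivAt_id z).const_mul (1 - α)).neg).const_add (c ^ (1 - α))
  have hed : HasDerivAt (fun z : ℝ => (c ^ (1 - α) + (1 - α) * (-z)) ^ (1 / (1 - α)))
      (1 / (1 - α) * (c ^ (1 - α) + (1 - α) * (-z)) ^ (1 / (1 - α) - 1) * -(1 - α)) z :=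
    (Real.hasDerivAt_rpow_const (Or.inr hp)).comp z hgd
  have he0 : 0 ≤ (c ^ (1 - α) + (1 - α) * (-z)) ^ (1 / (1 - α)) := Real.rpow_nonneg hz _
  have hce : 0 < c + (c ^ (1 - α) + (1 - α) * (-z)) ^ (1 / (1 - α)) := by linarith
  have hod : HasDerivAt (fun x : ℝ => x ^ (1 - α))
      ((1 - α) * (c + (c ^ (1 - α) + (1 - α) * (-z)) ^ (1 / (1 - α))) ^ (1 - α - 1))
      (c + (c ^ (1 - α) + (1 - α) * (-z)) ^ (1 / (1 - α))) :=
    Real.hasDerivAt_rpow_const (Or.inl (ne_of_gt hce))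
  have hcomp := (hod.comp z (hed.const_add c)).sub_const (c ^ (1 - α))
  have hfinal := hcomp.div_const (1 - α)
  convert hfinal using 1
  case e'_4 => rfl
  case e'_5 => rfl
  case e'_8 => rfl
  have h1 : 1 / (1 - α) - 1 = α / (1 - α) := by field_simp; ring
  have h2 : 1 - α - 1 = -α := by ring
  rw [h1, h2]
  field_simp

/-- For `0 < α < 1` and `c > 0`, the Logitron loss is continuously differentiable
on `ℝ`, with derivative `-(exp_{α,c}(-z)/(c+exp_{α,c}(-z)))^α` for `z < -c_α`
and `0` for `z ≥ -c_α`; the derivative tends to `0` as `z → -c_α` from the left. -/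
theorem logitron_contDiff (α c : ℝ) (hα0 : 0 < α) (hα1 : α < 1) (hc : 0 < c) :
    let cα : ℝ := c ^ (1 - α) / (α - 1)
    let eexp : ℝ → ℝ := fun v => (c ^ (1 - α) + (1 - α) * v) ^ (1 / (1 - α))
    let ℓ : ℝ → ℝ := fun z => ((c + eexp (-z)) ^ (1 - α) - c ^ (1 - α)) / (1 - α)
    let L : ℝ → ℝ := fun z => if z ≤ -cα then ℓ z else max 0 (-z)
    let L' : ℝ → ℝ := fun z =>
      if z < -cα then -(eexp (-z) / (c + eexp (-z))) ^ α else 0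
    (∀ z : ℝ, HasDerivAt L (L' z) z) ∧ Continuous L' ∧
      Filter.Tendsto L' (nhdsWithin (-cα) (Set.Iio (-cα))) (nhds 0) := by
  intro cα eexp ℓ L L'
  have h1α : (0:ℝ) < 1 - α := by linarith
  have h1α' : (1:ℝ) - α ≠ 0 := ne_of_gt h1α
  have hp0 : (0:ℝ) < 1 / (1 - α) := by positivity
  have hcpow : 0 < c ^ (1 - α) := Real.rpow_pos_of_pos hc _
  have hcα : -cα = c ^ (1 - α) / (1 - α) := by
    simp only [cα]
    rw [show (1:ℝ) - α = -(α - 1) by ring, div_neg]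
  have hcαpos : 0 < -cα := by rw [hcα]; positivity
  have hinner : ∀ z : ℝ, c ^ (1 - α) + (1 - α) * (-z) = (1 - α) * (-cα - z) := by
    intro z; rw [mul_sub]
    have : (1 - α) * -cα = c ^ (1 - α) := by rw [hcα]; field_simp
    rw [this]; ring
  have hℓdef : ℓ = fun z : ℝ =>
      ((c + (c ^ (1 - α) + (1 - α) * (-z)) ^ (1 / (1 - α))) ^ (1 - α) - c ^ (1 - α)) / (1 - α) :=
    rfl
  -- L vanishes on [-cα, ∞)
  have hL0 : ∀ z : ℝ, -cα ≤ z → L z = 0 := by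
    intro z hz
    rcases eq_or_lt_of_le hz with h | h
    · have hiz : c ^ (1 - α) + (1 - α) * (-z) = 0 := by
        rw [hinner, ← h]; ring
      simp only [L, ℓ, eexp, if_pos (le_of_eq h.symm), hiz,
        Real.zero_rpow (ne_of_gt hp0), add_zero, sub_self, zero_div]
    · have : ¬ z ≤ -cα := not_le.mpr h
      simp only [L, if_neg this]
      have : -z ≤ 0 := by linarith
      exact max_eq_left this
  -- the derivative claim
  have hD : ∀ z : ℝ, HasDerivAt L (L' z) z := by
    intro z
    rcases lt_trichotomy z (-cα) with hz | hz | hz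
    · -- z < -cα
      have hzin : 0 < c ^ (1 - α) + (1 - α) * (-z) := by
        rw [hinner]; have : 0 < -cα - z := by linarith
        positivity
      have haux := logitron_aux α c hα0 hα1 hc z hzin.le
      rw [← hℓdef] at haux
      have hEq : L =ᶠ[nhds z] ℓ := by
        filter_upwards [Iio_mem_nhds hz] with w hw
        have hw' : w < -cα := hw
        simp only [L, if_pos hw'.le]
      have hder : HasDerivAt L
          (-((c ^ (1 - α) + (1 - α) * (-z)) ^ (α / (1 - α)) *
            (c + (c ^ (1 - α) + (1 - α) * (-z)) ^ (1 / (1 - α))) ^ (-α))) z :=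
        haux.congr_of_eventuallyEq hEq
      convert hder using 1
      simp only [L', if_pos hz, eexp]
      have he0 : 0 ≤ (c ^ (1 - α) + (1 - α) * (-z)) ^ (1 / (1 - α)) :=
        Real.rpow_nonneg hzin.le _
      have hce : 0 < c + (c ^ (1 - α) + (1 - α) * (-z)) ^ (1 / (1 - α)) := by linarith
      rw [Real.div_rpow he0 hce.le, Real.rpow_neg hce.le, ← Real.rpow_mul hzin.le]
      have : 1 / (1 - α) * α = α / (1 - α) := by ring
      rw [this, div_eq_mul_inv]
    · -- z = -cα
      have hiz : c ^ (1 - α) + (1 - α) * (-z) = 0 := by rw [hinner, hz]; ring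
      have haux := logitron_aux α c hα0 hα1 hc z (le_of_eq hiz.symm)
      rw [← hℓdef] at haux
      have hd0 : HasDerivAt ℓ 0 z := by
        convert haux using 1
        rw [hiz, Real.zero_rpow (by positivity : α / (1 - α) ≠ 0)]
        ring
      have hleft : HasDerivWithinAt L 0 (Set.Iic z) z := by
        refine (hd0.hasDerivWithinAt).congr (fun w hw => ?_) ?_
        · simp only [L, if_pos (le_of_le_of_eq hw hz)]
        · simp only [L, if_pos (le_of_eq hz)]
      have hright : HasDerivWithinAt L 0 (Set.Ici z) z := by
        refine (hasDerivWithinAt_const z (Set.Ici z) (0:ℝ)).congr (fun w hw => ?_) ?_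
        · exact hL0 w (le_of_eq_of_le hz.symm hw)
        · exact hL0 z (le_of_eq hz.symm)
      have hu := hleft.union hright
      rw [Set.Iic_union_Ici, hasDerivWithinAt_univ] at hu
      have hnlt : ¬ z < -cα := by rw [hz]; exact lt_irrefl _
      have : L' z = 0 := by simp only [L', if_neg hnlt]
      rw [this]; exact hu
    · -- -cα < z
      have hEq : L =ᶠ[nhds z] fun _ => (0:ℝ) := by
        filter_upwards [Ioi_mem_nhds hz] with w hw
        exact hL0 w (le_of_lt hw)
      have : L' z = 0 := by
        simp only [L', if_neg (not_lt.mpr hz.le)]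
      rw [this]
      exact (hasDerivAt_const z (0:ℝ)).congr_of_eventuallyEq hEq
  -- continuity of L'
  have hMcont : Continuous (fun z : ℝ =>
      -((max (c ^ (1 - α) + (1 - α) * (-z)) 0) ^ (1 / (1 - α)) /
        (c + (max (c ^ (1 - α) + (1 - α) * (-z)) 0) ^ (1 / (1 - α)))) ^ α) := by
    have hg : Continuous fun z : ℝ => max (c ^ (1 - α) + (1 - α) * (-z)) 0 := by
      apply Continuous.max _ continuous_const
      continuity
    have hE : Continuous fun z : ℝ =>
        (max (c ^ (1 - α) + (1 - α) * (-z)) 0) ^ (1 / (1 - α)) := by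
      rw [continuous_iff_continuousAt]
      intro x
      exact (Real.continuousAt_rpow_const _ _ (Or.inr hp0.le)).comp hg.continuousAt
    have hEnn : ∀ z : ℝ, 0 ≤ (max (c ^ (1 - α) + (1 - α) * (-z)) 0) ^ (1 / (1 - α)) :=
      fun z => Real.rpow_nonneg (le_max_right _ _) _
    have hden : ∀ z : ℝ, c + (max (c ^ (1 - α) + (1 - α) * (-z)) 0) ^ (1 / (1 - α)) ≠ 0 :=
      fun z => ne_of_gt (by have := hEnn z; linarith)
    have hratio : Continuous fun z : ℝ =>
        (max (c ^ (1 - α) + (1 - α) * (-z)) 0) ^ (1 / (1 - α)) /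
          (c + (max (c ^ (1 - α) + (1 - α) * (-z)) 0) ^ (1 / (1 - α))) :=
      hE.div (continuous_const.add hE) hden
    have houter : Continuous fun z : ℝ =>
        ((max (c ^ (1 - α) + (1 - α) * (-z)) 0) ^ (1 / (1 - α)) /
          (c + (max (c ^ (1 - α) + (1 - α) * (-z)) 0) ^ (1 / (1 - α)))) ^ α := by
      rw [continuous_iff_continuousAt]
      intro x
      exact (Real.continuousAt_rpow_const _ _ (Or.inr hα0.le)).comp hratio.continuousAt
    exact houter.neg
  have hL'eq : L' = fun z : ℝ =>
      -((max (c ^ (1 - α) + (1 - α) * (-z)) 0) ^ (1 / (1 - α)) /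
        (c + (max (c ^ (1 - α) + (1 - α) * (-z)) 0) ^ (1 / (1 - α)))) ^ α := by
    funext z
    by_cases hz : z < -cα
    · have hzin : 0 < c ^ (1 - α) + (1 - α) * (-z) := by
        rw [hinner]; have : 0 < -cα - z := by linarith
        positivity
      simp only [L', if_pos hz, eexp, max_eq_left hzin.le]
    · have hzin : c ^ (1 - α) + (1 - α) * (-z) ≤ 0 := by
        rw [hinner]
        have : -cα - z ≤ 0 := by push_neg at hz; linarith
        exact mul_nonpos_of_nonneg_of_nonpos h1α.le this
      simp only [L', if_neg hz, max_eq_right hzin,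
        Real.zero_rpow (ne_of_gt hp0), zero_div,
        Real.zero_rpow (ne_of_gt hα0), neg_zero]
  have hL'cont : Continuous L' := by rw [hL'eq]; exact hMcont
  refine ⟨hD, hL'cont, ?_⟩
  have hval : L' (-cα) = 0 := by simp only [L', if_neg (lt_irrefl _)]
  have := hL'cont.continuousAt (x := -cα)
  rw [ContinuousAt, hval] at this
  exact this.mono_left nhdsWithin_le_nhds
end

section
/- For all α ≥ 0 and c > 0, the Logitron loss L_{α,c} is 1-Lipschitz: |L_{α,c}(z₁) - L_{α,c}(z₂)| ≤ |z₁ - z₂| for all z₁, z₂ ∈ ℝ. -/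
open Set Real

private lemma perceptron_lip (x y : ℝ) : |max 0 (-x) - max 0 (-y)| ≤ |x - y| := by
  rw [max_comm (0:ℝ) (-x), max_comm (0:ℝ) (-y)]
  calc |max (-x) 0 - max (-y) 0| ≤ |(-x) - (-y)| := abs_max_sub_max_le_abs _ _ _
    _ = |x - y| := by rw [show (-x) - (-y) = -(x - y) by ring, abs_neg]

private lemma glue_le {f g : ℝ → ℝ} {a : ℝ} (hfg : f a = g a)
    (hf : ∀ x ∈ Set.Iic a, ∀ y ∈ Set.Iic a, |f x - f y| ≤ |x - y|)
    (hg : ∀ x y, |g x - g y| ≤ |x - y|) (x y : ℝ) :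
    |(if x ≤ a then f x else g x) - (if y ≤ a then f y else g y)| ≤ |x - y| := by
  by_cases hx : x ≤ a <;> by_cases hy : y ≤ a <;>
    simp only [hx, hy, if_true, if_false, if_pos, if_neg, not_false_iff]
  · exact hf x hx y hy
  · push_neg at hy
    calc |f x - g y| ≤ |f x - f a| + |f a - g y| := abs_sub_le _ _ _
      _ = |f x - f a| + |g a - g y| := by rw [hfg]
      _ ≤ |x - a| + |a - y| := add_le_add (hf x hx a Set.self_mem_Iic) (hg a y)
      _ = |x - y| := by
          rw [abs_of_nonpos (by linarith : x - a ≤ 0),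
            abs_of_nonpos (by linarith : a - y ≤ 0),
            abs_of_nonpos (by linarith : x - y ≤ 0)]
          ring
  · push_neg at hx
    calc |g x - f y| ≤ |g x - g a| + |g a - f y| := abs_sub_le _ _ _
      _ = |g x - g a| + |f a - f y| := by rw [hfg]
      _ ≤ |x - a| + |a - y| := add_le_add (hg x a) (hf a Set.self_mem_Iic y hy)
      _ = |x - y| := by
          rw [abs_of_nonneg (by linarith : (0:ℝ) ≤ x - a),
            abs_of_nonneg (by linarith : (0:ℝ) ≤ a - y),
            abs_of_nonneg (by linarith : (0:ℝ) ≤ x - y)]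
          ring
  · exact hg x y

private lemma glue2_le {f g : ℝ → ℝ} {a : ℝ}
    (hf : ∀ x y, a < x → a < y → |f x - f y| ≤ |x - y|)
    (hend : ∀ y, a < y → |g a - f y| ≤ y - a)
    (hg : ∀ x y, |g x - g y| ≤ |x - y|) (x y : ℝ) :
    |(if a < x then f x else g x) - (if a < y then f y else g y)| ≤ |x - y| := by
  by_cases hx : a < x <;> by_cases hy : a < y <;>
    simp only [hx, hy, if_true, if_false, if_pos, if_neg, not_false_iff]
  · exact hf x y hx hy
  · push_neg at hy
    rw [abs_sub_comm]
    calc |g y - f x| ≤ |g y - g a| + |g a - f x| := abs_sub_le _ _ _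
      _ ≤ |y - a| + (x - a) := add_le_add (hg y a) (hend x hx)
      _ = |x - y| := by
          rw [abs_of_nonpos (by linarith : y - a ≤ 0),
            abs_of_nonneg (by linarith : (0:ℝ) ≤ x - y)]
          ring
  · push_neg at hx
    calc |g x - f y| ≤ |g x - g a| + |g a - f y| := abs_sub_le _ _ _
      _ ≤ |x - a| + (y - a) := add_le_add (hg x a) (hend y hy)
      _ = |x - y| := by
          rw [abs_of_nonpos (by linarith : x - a ≤ 0),
            abs_of_nonpos (by linarith : x - y ≤ 0)]
          ring
  · exact hg x y

private lemma logitron_hasDerivAt (α c : ℝ) (hc : 0 < c) (hq : (1:ℝ) - α ≠ 0) {z : ℝ}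
    (hu0 : 0 ≤ c ^ (1 - α) + (1 - α) * (-z))
    (hor : c ^ (1 - α) + (1 - α) * (-z) ≠ 0 ∨ 1 ≤ 1 / (1 - α)) :
    HasDerivAt
      (fun z => ((c + (c ^ (1 - α) + (1 - α) * (-z)) ^ (1 / (1 - α))) ^ (1 - α) - c ^ (1 - α)) / (1 - α))
      (-((c + (c ^ (1 - α) + (1 - α) * (-z)) ^ (1 / (1 - α))) ^ (-α)
          * (c ^ (1 - α) + (1 - α) * (-z)) ^ (1 / (1 - α) - 1))) z := by
  set U : ℝ → ℝ := fun z => c ^ (1 - α) + (1 - α) * (-z) with hU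
  have hu : HasDerivAt U (α - 1) z := by
    have := ((hasDerivAt_neg z).const_mul (1 - α)).const_add (c ^ (1 - α))
    exact this.congr_deriv (by ring)
  have hE : HasDerivAt (fun z => U z ^ (1 / (1 - α)))
      ((1 / (1 - α)) * U z ^ (1 / (1 - α) - 1) * (α - 1)) z :=
    (Real.hasStrictDerivAt_rpow_const hor).hasDerivAt.comp (h₂ := fun x => x ^ (1 / (1 - α))) z hu
  have hA0 : c + U z ^ (1 / (1 - α)) ≠ 0 := by
    have := Real.rpow_nonneg hu0 (1 / (1 - α))
    positivity
  have houter : HasDerivAt (fun z => (c + U z ^ (1 / (1 - α))) ^ (1 - α))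
      ((1 - α) * (c + U z ^ (1 / (1 - α))) ^ (1 - α - 1)
        * ((1 / (1 - α)) * U z ^ (1 / (1 - α) - 1) * (α - 1))) z :=
    (Real.hasStrictDerivAt_rpow_const (Or.inl hA0)).hasDerivAt.comp (h₂ := fun x => x ^ (1 - α)) z (hE.const_add c)
  have := (houter.sub_const (c ^ (1 - α))).div_const (1 - α)
  refine this.congr_deriv ?_
  rw [show (1 : ℝ) - α - 1 = -α by ring]
  simp only [hU]
  field_simp
  ring

private lemma logitron_deriv_bound (α c : ℝ) (hα : 0 ≤ α) (hc : 0 < c) (hq : (1:ℝ) - α ≠ 0)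
    {u : ℝ} (hu0 : 0 ≤ u) :
    |(-((c + u ^ (1 / (1 - α))) ^ (-α) * u ^ (1 / (1 - α) - 1)))| ≤ 1 := by
  set E := u ^ (1 / (1 - α)) with hE
  have hE0 : 0 ≤ E := Real.rpow_nonneg hu0 _
  have hA : 0 < c + E := by positivity
  have h1 : u ^ (1 / (1 - α) - 1) = E ^ α := by
    rw [hE, ← Real.rpow_mul hu0]
    congr 1
    field_simp
    ring
  rw [abs_neg, h1, abs_of_nonneg (by positivity)]
  rw [Real.rpow_neg hA.le, inv_mul_eq_div, ← Real.div_rpow hE0 hA.le]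
  exact Real.rpow_le_one (by positivity) (by rw [div_le_one hA]; linarith) hα

/-- For all `α ≥ 0` and `c > 0`, the Logitron loss is 1-Lipschitz. -/
theorem logitron_lipschitz (α c : ℝ) (hα : 0 ≤ α) (hc : 0 < c) :
    let cα : ℝ := c ^ (1 - α) / (α - 1)
    let eexp : ℝ → ℝ := fun v => (c ^ (1 - α) + (1 - α) * v) ^ (1 / (1 - α))
    let ℓ : ℝ → ℝ := fun z => ((c + eexp (-z)) ^ (1 - α) - c ^ (1 - α)) / (1 - α)
    let L : ℝ → ℝ := fun z =>
      if α = 1 then Real.log (1 + Real.exp (-z))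
      else if α < 1 then (if z ≤ -cα then ℓ z else max 0 (-z))
      else (if -cα < z then ℓ z else max 0 (-z))
    ∀ z₁ z₂ : ℝ, |L z₁ - L z₂| ≤ |z₁ - z₂| := by
  intro cα eexp ℓ L z₁ z₂
  have hCq : 0 < c ^ (1 - α) := Real.rpow_pos_of_pos hc _
  by_cases h1 : α = 1
  · -- α = 1 : logistic loss
    simp only [L, if_pos h1]
    have key : ∀ x ∈ (Set.univ : Set ℝ), HasDerivWithinAt (fun z => Real.log (1 + Real.exp (-z)))
        ((fun z => -Real.exp (-z) / (1 + Real.exp (-z))) x) Set.univ x := by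
      intro x _
      have hexp : HasDerivAt (fun z => Real.exp (-z)) (-Real.exp (-x)) x := by
        have := (Real.hasDerivAt_exp (-x)).comp x (hasDerivAt_neg x)
        exact this.congr_deriv (by ring)
      have hpos : (0:ℝ) < 1 + Real.exp (-x) := by positivity
      exact ((hexp.const_add 1).log hpos.ne').hasDerivWithinAt
    have bound : ∀ x ∈ (Set.univ : Set ℝ),
        ‖(fun z => -Real.exp (-z) / (1 + Real.exp (-z))) x‖ ≤ 1 := by
      intro x _
      have hpos : (0:ℝ) < 1 + Real.exp (-x) := by positivity
      simp only [Real.norm_eq_abs, neg_div, abs_neg]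
      rw [abs_of_nonneg (by positivity), div_le_one hpos]
      linarith [Real.exp_pos (-x)]
    have := convex_univ.norm_image_sub_le_of_norm_hasDerivWithin_le key bound
      (Set.mem_univ z₂) (Set.mem_univ z₁)
    simpa [Real.norm_eq_abs] using this
  · have hq : (1:ℝ) - α ≠ 0 := fun h => h1 (by linarith)
    simp only [L, if_neg h1]
    -- common facts
    have hℓ : ℓ = fun z => ((c + (c ^ (1 - α) + (1 - α) * (-z)) ^ (1 / (1 - α))) ^ (1 - α)
        - c ^ (1 - α)) / (1 - α) := rfl
    rcases Ne.lt_or_gt h1 with hlt | hgt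
    · -- α < 1
      have h1α : 0 < 1 - α := by linarith
      simp only [if_pos hlt]
      have hcα : cα = c ^ (1 - α) / (α - 1) := rfl
      have hα1ne : α - 1 ≠ 0 := fun h => hq (by linarith)
      have hu0 : ∀ x ∈ Set.Iic (-cα), 0 ≤ c ^ (1 - α) + (1 - α) * (-x) := by
        intro x hx
        simp only [Set.mem_Iic, hcα] at hx
        have key : (1 - α) * (-(c ^ (1 - α) / (α - 1))) = c ^ (1 - α) := by
          field_simp [hα1ne]; ring
        have h2 := mul_le_mul_of_nonneg_left hx h1α.le
        rw [key] at h2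
        linarith
      have hf : ∀ x ∈ Set.Iic (-cα), ∀ y ∈ Set.Iic (-cα), |ℓ x - ℓ y| ≤ |x - y| := by
        intro x hx y hy
        have key := (convex_Iic (-cα)).norm_image_sub_le_of_norm_hasDerivWithin_le
          (f := ℓ)
          (f' := fun z => -((c + (c ^ (1 - α) + (1 - α) * (-z)) ^ (1 / (1 - α))) ^ (-α)
            * (c ^ (1 - α) + (1 - α) * (-z)) ^ (1 / (1 - α) - 1)))
          (C := 1)
          (fun w hw => by
            rw [hℓ]
            exact (logitron_hasDerivAt α c hc hq (hu0 w hw)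
              (Or.inr (by rw [le_div_iff₀ h1α]; linarith))).hasDerivWithinAt)
          (fun w hw => by
            rw [Real.norm_eq_abs]
            exact logitron_deriv_bound α c hα hc hq (hu0 w hw))
          hy hx
        simpa [Real.norm_eq_abs, abs_sub_comm] using key
      have hfg : ℓ (-cα) = max 0 (-(-cα)) := by
        have hcαneg : cα < 0 := div_neg_of_pos_of_neg hCq (by linarith)
        have hz : c ^ (1 - α) + (1 - α) * (-(-cα)) = 0 := by
          rw [hcα]; field_simp [hα1ne]; ring
        show ((c + eexp (-(-cα))) ^ (1 - α) - c ^ (1 - α)) / (1 - α) = max 0 (-(-cα))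
        have he : eexp (-(-cα)) = 0 := by
          show (c ^ (1 - α) + (1 - α) * (-(-cα))) ^ (1 / (1 - α)) = 0
          rw [hz]
          exact Real.zero_rpow (one_div_pos.mpr h1α).ne'
        rw [he, add_zero, sub_self, zero_div, neg_neg, max_eq_left hcαneg.le]
      exact glue_le hfg hf perceptron_lip z₁ z₂
    · -- α > 1
      have hα1 : 0 < α - 1 := by linarith
      simp only [if_neg (not_lt.mpr hgt.le)]
      have hcα : cα = c ^ (1 - α) / (α - 1) := rfl
      have hα1ne : α - 1 ≠ 0 := ne_of_gt hα1
      have hcαpos : 0 < cα := div_pos hCq hα1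
      have hupos : ∀ x, -cα < x → 0 < c ^ (1 - α) + (1 - α) * (-x) := by
        intro x hx
        rw [hcα] at hx
        have key : (1 - α) * (c ^ (1 - α) / (α - 1)) = -(c ^ (1 - α)) := by
          field_simp; ring
        nlinarith [mul_lt_mul_of_neg_left hx (by linarith : 1 - α < 0)]
      have hf : ∀ x y, -cα < x → -cα < y → |ℓ x - ℓ y| ≤ |x - y| := by
        intro x y hx hy
        have key := (convex_Ioi (-cα)).norm_image_sub_le_of_norm_hasDerivWithin_le
          (f := ℓ)
          (f' := fun z => -((c + (c ^ (1 - α) + (1 - α) * (-z)) ^ (1 / (1 - α))) ^ (-α)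
            * (c ^ (1 - α) + (1 - α) * (-z)) ^ (1 / (1 - α) - 1)))
          (C := 1)
          (fun w hw => by
            rw [hℓ]
            exact (logitron_hasDerivAt α c hc hq (hupos w hw).le
              (Or.inl (hupos w hw).ne')).hasDerivWithinAt)
          (fun w hw => by
            rw [Real.norm_eq_abs]
            exact logitron_deriv_bound α c hα hc hq (hupos w hw).le)
          hy hx
        simpa [Real.norm_eq_abs, abs_sub_comm] using key
      have hend : ∀ y, -cα < y → |max 0 (-(-cα)) - ℓ y| ≤ y - (-cα) := by
        intro y hy
        rw [neg_neg, max_eq_right hcαpos.le]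
        set U := c ^ (1 - α) + (1 - α) * (-y) with hUdef
        have hU : 0 < U := hupos y hy
        set E := U ^ (1 / (1 - α)) with hEdef
        have hE : 0 < E := Real.rpow_pos_of_pos hU _
        have hA : 0 < c + E := by positivity
        have hℓy : ℓ y = ((c + E) ^ (1 - α) - c ^ (1 - α)) / (1 - α) := rfl
        have hEq : E ^ (1 - α) = U := by
          rw [hEdef, ← Real.rpow_mul hU.le]
          rw [show 1 / (1 - α) * (1 - α) = 1 by field_simp, Real.rpow_one]
        have hstep : (c + E) ^ (1 - α) ≤ U := by
          rw [← hEq]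
          exact Real.rpow_le_rpow_of_nonpos hE (by linarith) (by linarith)
        have hAq : 0 ≤ (c + E) ^ (1 - α) := Real.rpow_nonneg hA.le _
        have heq1 : cα - ℓ y = (c + E) ^ (1 - α) / (α - 1) := by
          rw [hℓy, hcα]; field_simp [hα1ne]; ring
        have heq2 : U / (α - 1) = y + cα := by
          rw [hUdef, hcα]; field_simp [hα1ne]; ring
        have h0 : 0 ≤ cα - ℓ y := by rw [heq1]; positivity
        have h2 : cα - ℓ y ≤ y + cα := by
          rw [heq1, ← heq2]
          gcongr
        rw [abs_of_nonneg h0]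
        linarith
      exact glue2_le hf hend perceptron_lip z₁ z₂
end

section
/- For c > 0, the function L(z) = c^{-1}/(2 + cz) for z > -c^{-1} and L(z) = -z for z ≤ -c^{-1} is convex on ℝ and differentiable everywhere, with derivative L'(z) = max(-1, -(2 + cz)^{-2}) for z > -c^{-1}, and L'(z) = -1 for z ≤ -c^{-1}. -/
private lemma hg_deriv (c : ℝ) (hc : 0 < c) (z : ℝ) (h0 : (2 + c * z) ≠ 0) :
    HasDerivAt (fun z : ℝ => c⁻¹ / (2 + c * z)) (-((2 + c * z) ^ 2)⁻¹) z := by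
  have h1 : HasDerivAt (fun z : ℝ => 2 + c * z) c z := by
    simpa using ((hasDerivAt_id z).const_mul c).const_add 2
  have h2 := (h1.inv h0).const_mul c⁻¹
  have : (fun z : ℝ => c⁻¹ * (2 + c * z)⁻¹) = fun z : ℝ => c⁻¹ / (2 + c * z) := by
    funext y; rw [div_eq_mul_inv]
  simp only [Pi.inv_apply] at h2; rw [this] at h2
  refine h2.congr_deriv ?_
  rw [neg_div, mul_neg, ← mul_div_assoc, inv_mul_cancel₀ hc.ne', one_div]

/-- For `c > 0`, the H+Logitron loss with `k = -1` (`α = 2`),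
`L(z) = c⁻¹/(2+cz)` for `z > -c⁻¹` and `L(z) = -z` otherwise, is convex on `ℝ`
and differentiable everywhere, with derivative `max(-1, -(2+cz)⁻²)` for
`z > -c⁻¹` and `-1` otherwise. -/
theorem hplus_logitron_convex_diff (c : ℝ) (hc : 0 < c) :
    let L : ℝ → ℝ := fun z => if -c⁻¹ < z then c⁻¹ / (2 + c * z) else -z
    let L' : ℝ → ℝ := fun z =>
      if -c⁻¹ < z then max (-1) (-((2 + c * z) ^ 2)⁻¹) else -1
    ConvexOn ℝ Set.univ L ∧ ∀ z : ℝ, HasDerivAt L (L' z) z := by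
  intro L L'
  have hcne : c ≠ 0 := ne_of_gt hc
  have hone : ∀ z : ℝ, -c⁻¹ < z → 1 < 2 + c * z := by
    intro z hz
    have : -1 < c * z := by
      have := (mul_lt_mul_iff_right₀ hc).2 hz
      rwa [mul_neg, mul_inv_cancel₀ hcne] at this
    linarith
  have honele : ∀ z : ℝ, -c⁻¹ ≤ z → 1 ≤ 2 + c * z := by
    intro z hz
    have : -1 ≤ c * z := by
      have := (mul_le_mul_iff_right₀ hc).2 hz
      rwa [mul_neg, mul_inv_cancel₀ hcne] at this
    linarith
  -- the derivative statement
  have hderiv : ∀ z : ℝ, HasDerivAt L (L' z) z := by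
    intro z
    rcases lt_trichotomy z (-c⁻¹) with hz | hz | hz
    · -- left region
      have hEq : L =ᶠ[nhds z] fun y => -y := by
        filter_upwards [Iio_mem_nhds hz] with y hy
        have hy' : y < -c⁻¹ := hy
        simp only [L, if_neg (not_lt.2 (le_of_lt hy'))]
      have h1 : HasDerivAt (fun y : ℝ => -y) (-1) z := by
        exact (hasDerivAt_id' z).neg
      have : L' z = -1 := by simp [L', if_neg (not_lt.2 (le_of_lt hz))]
      rw [this]
      exact h1.congr_of_eventuallyEq hEq
    · -- gluing point
      subst hz
      have h0 : (2 + c * (-c⁻¹)) = 1 := by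
        rw [mul_neg, mul_inv_cancel₀ hcne]; norm_num
      have hL' : L' (-c⁻¹) = -1 := by simp [L']
      rw [hL']
      have hleft : HasDerivWithinAt L (-1) (Set.Iic (-c⁻¹)) (-c⁻¹) := by
        have h1 : HasDerivWithinAt (fun y : ℝ => -y) (-1) (Set.Iic (-c⁻¹)) (-c⁻¹) := by
          exact ((hasDerivAt_id' (-c⁻¹)).neg).hasDerivWithinAt
        refine h1.congr (fun y hy => ?_) ?_
        · have hy' : y ≤ -c⁻¹ := hy
          simp only [L, if_neg (not_lt.2 hy')]
        · simp [L]
      have hright : HasDerivWithinAt L (-1) (Set.Ici (-c⁻¹)) (-c⁻¹) := by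
        have hne : (2 + c * (-c⁻¹)) ≠ 0 := by rw [h0]; norm_num
        have h1 := (hg_deriv c hc (-c⁻¹) hne).hasDerivWithinAt (s := Set.Ici (-c⁻¹))
        rw [h0] at h1
        norm_num at h1
        refine h1.congr (fun y hy => ?_) ?_
        · have hy' : -c⁻¹ ≤ y := hy
          rcases eq_or_lt_of_le hy' with h | h
          · subst h
            simp only [L, if_neg (lt_irrefl _), h0]
            field_simp
          · simp only [L, if_pos h]
        · simp only [L, if_neg (lt_irrefl _), h0]
          field_simp
      have := hleft.union hright
      rwa [Set.Iic_union_Ici, hasDerivWithinAt_univ] at this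
    · -- right region
      have h1 : 1 < 2 + c * z := hone z hz
      have hne : (2 + c * z) ≠ 0 := by linarith
      have hEq : L =ᶠ[nhds z] fun y => c⁻¹ / (2 + c * y) := by
        filter_upwards [Ioi_mem_nhds hz] with y hy
        have hy' : -c⁻¹ < y := hy
        simp only [L, if_pos hy']
      have hmax : L' z = -((2 + c * z) ^ 2)⁻¹ := by
        have hsq : 1 < (2 + c * z) ^ 2 := by nlinarith
        have : ((2 + c * z) ^ 2)⁻¹ ≤ 1 := by
          rw [inv_le_one_iff₀]; right; linarith
        simp only [L', if_pos hz]
        exact max_eq_right (by linarith)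
      rw [hmax]
      exact (hg_deriv c hc z hne).congr_of_eventuallyEq hEq
  refine ⟨?_, hderiv⟩
  -- convexity
  have hd : ∀ z, deriv L z = L' z := fun z => (hderiv z).deriv
  have hmono : MonotoneOn (deriv L) (interior (Set.univ : Set ℝ)) := by
    intro a _ b _ hab
    rw [hd a, hd b]
    simp only [L']
    by_cases ha : -c⁻¹ < a
    · have hb : -c⁻¹ < b := lt_of_lt_of_le ha hab
      rw [if_pos ha, if_pos hb]
      refine max_le_max le_rfl (neg_le_neg ?_)
      have h1a : 1 ≤ 2 + c * a := honele a (le_of_lt ha)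
      have h1b : 2 + c * a ≤ 2 + c * b := by
        have := (mul_le_mul_iff_right₀ hc).2 hab; linarith
      gcongr
    · rw [if_neg ha]
      by_cases hb : -c⁻¹ < b
      · rw [if_pos hb]; exact le_max_left _ _
      · rw [if_neg hb]
  refine MonotoneOn.convexOn_of_deriv convex_univ ?_ ?_ hmono
  · exact fun z _ => ((hderiv z).differentiableAt.continuousAt).continuousWithinAt
  · exact fun z _ => (hderiv z).differentiableAt.differentiableWithinAt
end

section
/- Let α > 1 and c > 0 and set c_α = c^{1-α}/(α-1) > 0. Then as z → (-c_α)⁺, the extended logistic loss ℓ_{α,c}(z) = ln_{α,c}(c + exp_{α,c}(-z)) tends to c_α, i.e., lim_{z → -c_α, z > -c_α} ℓ_{α,c}(z) = c_α; consequently the Logitron loss L_{α,c} (defined as ℓ_{α,c}(z) for z > -c_α and max(0,-z) = -z for z ≤ -c_α) is continuous at z = -c_α. -/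
open Filter Set Real Topology

/-- For `α > 1` and `c > 0` with `c_α = c^(1-α)/(α-1) > 0`, the extended
logistic loss `ℓ_{α,c}(z) = ln_{α,c}(c + exp_{α,c}(-z))` tends to `c_α` as
`z → (-c_α)⁺`; consequently the Logitron loss is continuous at `-c_α`. -/
theorem logitron_boundary_limit (α c : ℝ) (hα : 1 < α) (hc : 0 < c) :
    let cα : ℝ := c ^ (1 - α) / (α - 1)
    let eexp : ℝ → ℝ := fun v => (c ^ (1 - α) + (1 - α) * v) ^ (1 / (1 - α))
    let ℓ : ℝ → ℝ := fun z => ((c + eexp (-z)) ^ (1 - α) - c ^ (1 - α)) / (1 - α)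
    let L : ℝ → ℝ := fun z => if -cα < z then ℓ z else max 0 (-z)
    Filter.Tendsto ℓ (nhdsWithin (-cα) (Set.Ioi (-cα))) (nhds cα) ∧
      ContinuousAt L (-cα) := by
  intro cα eexp ℓ L
  have hα1 : (0:ℝ) < α - 1 := by linarith
  have hcp : (0:ℝ) < c ^ (1 - α) := Real.rpow_pos_of_pos hc _
  have hcα : 0 < cα := div_pos hcp hα1
  -- base tendsto 0 within Ioi 0
  have hbase : Tendsto (fun z => c ^ (1 - α) + (1 - α) * (-z))
      (𝓝[>] (-cα)) (𝓝[>] (0:ℝ)) := by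
    rw [tendsto_nhdsWithin_iff]
    constructor
    · have : c ^ (1 - α) + (1 - α) * (-(-cα)) = 0 := by
        simp only [cα]; field_simp; ring
      have hcont : Tendsto (fun z => c ^ (1 - α) + (1 - α) * (-z)) (𝓝 (-cα))
          (𝓝 (c ^ (1 - α) + (1 - α) * (-(-cα)))) := by
        exact (continuous_const.add (continuous_const.mul continuous_neg)).tendsto _
      rw [this] at hcont
      exact hcont.mono_left nhdsWithin_le_nhds
    · filter_upwards [self_mem_nhdsWithin] with z hz
      have hz' : -z < cα := by simpa using neg_lt_neg (Set.mem_Ioi.mp hz)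
      have : (1 - α) * (-z) > (1 - α) * cα := by
        apply mul_lt_mul_of_neg_left hz' (by linarith)
      have hne : (1 - α) * cα = -(c ^ (1 - α)) := by
        simp only [cα]
        rw [show (1:ℝ) - α = -(α - 1) by ring]
        field_simp
      rw [hne] at this
      simp only [mem_Ioi]; linarith
  -- eexp(-z) → atTop
  have hexp : Tendsto (fun z => eexp (-z)) (𝓝[>] (-cα)) atTop := by
    have hpow : Tendsto (fun x : ℝ => x ^ (1 / (1 - α))) (𝓝[>] (0:ℝ)) atTop := by
      have h1 : Tendsto (fun x : ℝ => (x⁻¹) ^ (1 / (α - 1))) (𝓝[>] (0:ℝ)) atTop :=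
        (tendsto_rpow_atTop (by positivity : (0:ℝ) < 1 / (α - 1))).comp
          tendsto_inv_nhdsGT_zero
      refine h1.congr' ?_
      filter_upwards [self_mem_nhdsWithin] with x hx
      rw [← Real.rpow_neg_one x, ← Real.rpow_mul (le_of_lt hx)]
      congr 1
      rw [show (1:ℝ) - α = -(α - 1) by ring, div_neg]
      ring

    exact hpow.comp hbase
  -- (c + eexp(-z))^(1-α) → 0
  have hmain : Tendsto (fun z => (c + eexp (-z)) ^ (1 - α)) (𝓝[>] (-cα)) (𝓝 0) := by
    have h2 : Tendsto (fun z => c + eexp (-z)) (𝓝[>] (-cα)) atTop :=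
      tendsto_atTop_add_const_left _ c hexp
    have h3 : Tendsto (fun x : ℝ => x ^ (1 - α)) atTop (𝓝 0) := by
      have := tendsto_rpow_neg_atTop hα1
      simpa [neg_sub] using this
    exact h3.comp h2
  have hℓ : Tendsto ℓ (𝓝[>] (-cα)) (𝓝 cα) := by
    have : Tendsto (fun z => ((c + eexp (-z)) ^ (1 - α) - c ^ (1 - α)) / (1 - α))
        (𝓝[>] (-cα)) (𝓝 ((0 - c ^ (1 - α)) / (1 - α))) :=
      (hmain.sub_const _).div_const _
    have heq : (0 - c ^ (1 - α)) / (1 - α) = cα := by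
      simp only [cα]
      rw [zero_sub, show (1:ℝ) - α = -(α - 1) by ring, div_neg, neg_div, neg_neg]
    rw [heq] at this
    exact this
  refine ⟨hℓ, ?_⟩
  -- continuity
  have hLval : L (-cα) = cα := by
    simp only [L, lt_irrefl, if_false, neg_neg, max_eq_right hcα.le]
  rw [ContinuousAt, hLval, ← nhdsLE_sup_nhdsGT (-cα), tendsto_sup]
  constructor
  · have hmax : Tendsto (fun z : ℝ => max 0 (-z)) (𝓝[≤] (-cα)) (𝓝 cα) := by
      have : Tendsto (fun z : ℝ => max 0 (-z)) (𝓝 (-cα)) (𝓝 (max 0 (-(-cα)))) :=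
        (continuous_const.max continuous_neg).tendsto _
      rw [neg_neg, max_eq_right hcα.le] at this
      exact this.mono_left nhdsWithin_le_nhds
    refine hmax.congr' ?_
    filter_upwards [self_mem_nhdsWithin] with z hz
    have : ¬ (-cα < z) := not_lt.mpr hz
    simp [L, this]
  · refine hℓ.congr' ?_
    filter_upwards [self_mem_nhdsWithin] with z hz
    simp [L, Set.mem_Ioi.mp hz]
end
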